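/- Let Q be a finite right Bol loop of odd order and let H be a normal subloop of Q with |H| = 3. Then H ⊆ Z(Q). -/

import Mathlib

/-- A loop: a set with binary operation and identity element in which all left and
right translations are bijective. -/
class QLoop (Q : Type*) extends Mul Q, One Q where
  one_mul : ∀ x : Q, 1 * x = x
  mul_one : ∀ x : Q, x * 1 = x
  bij_left : ∀ a : Q, Function.Bijective (fun x : Q => a * x)
  bij_right : ∀ a : Q, Function.Bijective (fun x : Q => x * a)

/-- The right Bol identity. -/
def IsRightBol (Q : Type*) [QLoop Q] : Prop :=
  ∀ x y z : Q, ((x * y) * z) * y = x * ((y * z) * y)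

/-- Left translation as a permutation. -/
noncomputable def Lt {Q : Type*} [QLoop Q] (a : Q) : Equiv.Perm Q :=
  Equiv.ofBijective (fun x : Q => a * x) (QLoop.bij_left a)

/-- Right translation as a permutation. -/
noncomputable def Rt {Q : Type*} [QLoop Q] (a : Q) : Equiv.Perm Q :=
  Equiv.ofBijective (fun x : Q => x * a) (QLoop.bij_right a)

/-- The right multiplication group. -/
noncomputable def rightMultGroup (Q : Type*) [QLoop Q] : Subgroup (Equiv.Perm Q) :=
  Subgroup.closure (Set.range (Rt : Q → Equiv.Perm Q))

/-- The right inner mapping group, generated by R_{x,y} = R_{y x}⁻¹ ∘ R_x ∘ R_y. -/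
noncomputable def rightInn (Q : Type*) [QLoop Q] : Subgroup (Equiv.Perm Q) :=
  Subgroup.closure { φ : Equiv.Perm Q | ∃ x y : Q, φ = (Rt (y * x))⁻¹ * Rt x * Rt y }

/-- The inner mapping group, generated by R_{x,y}, L_{x,y} and T_x. -/
noncomputable def innGroup (Q : Type*) [QLoop Q] : Subgroup (Equiv.Perm Q) :=
  Subgroup.closure
    ({ φ : Equiv.Perm Q | ∃ x y : Q, φ = (Rt (y * x))⁻¹ * Rt x * Rt y } ∪
     { φ : Equiv.Perm Q | ∃ x y : Q, φ = (Lt (x * y))⁻¹ * Lt x * Lt y } ∪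
     { φ : Equiv.Perm Q | ∃ x : Q, φ = (Lt x)⁻¹ * Rt x })

/-- A subloop: contains 1, closed under multiplication and both divisions. -/
structure IsSubloop {Q : Type*} [QLoop Q] (S : Set Q) : Prop where
  one_mem : (1 : Q) ∈ S
  mul_mem : ∀ ⦃a b : Q⦄, a ∈ S → b ∈ S → a * b ∈ S
  ldiv_mem : ∀ ⦃a x : Q⦄, a ∈ S → a * x ∈ S → x ∈ S
  rdiv_mem : ∀ ⦃a y : Q⦄, a ∈ S → y * a ∈ S → y ∈ S

/-- A normal subloop: a subloop invariant under all inner mappings. -/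
def IsNormalSubloop {Q : Type*} [QLoop Q] (S : Set Q) : Prop :=
  IsSubloop S ∧ ∀ φ ∈ innGroup Q, (φ : Equiv.Perm Q) '' S = S

/-- The commutant. -/
def commutant (Q : Type*) [QLoop Q] : Set Q := { a : Q | ∀ y : Q, a * y = y * a }

/-- The left nucleus. -/
def leftNucleus (Q : Type*) [QLoop Q] : Set Q :=
  { a : Q | ∀ y z : Q, a * (y * z) = (a * y) * z }

/-- The center. -/
def loopCenter (Q : Type*) [QLoop Q] : Set Q :=
  { a : Q | ∀ y z : Q, a * y = y * a ∧ a * (y * z) = (a * y) * z ∧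
      y * (a * z) = (y * a) * z ∧ y * (z * a) = (y * z) * a }

/-- Powers: x^0 = 1, x^{n+1} = x^n * x. -/
def lpow {Q : Type*} [QLoop Q] (x : Q) : ℕ → Q
  | 0 => 1
  | n + 1 => lpow x n * x

/-- The subloop generated by an element. -/
def subloopClosure {Q : Type*} [QLoop Q] (x : Q) : Set Q :=
  ⋂₀ { S : Set Q | IsSubloop S ∧ x ∈ S }

/-- Power associativity: the subloop generated by any element is associative. -/
def PowerAssociative (Q : Type*) [QLoop Q] : Prop :=
  ∀ x : Q, ∀ a ∈ subloopClosure x, ∀ b ∈ subloopClosure x, ∀ c ∈ subloopClosure x,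
    a * (b * c) = (a * b) * c
namespace Stmt10Aux

variable {Q : Type*} [QLoop Q]

lemma qone_mul (x : Q) : 1 * x = x := QLoop.one_mul x
lemma qmul_one (x : Q) : x * 1 = x := QLoop.mul_one x

lemma lcan {a x y : Q} (h : a * x = a * y) : x = y := (QLoop.bij_left a).injective h
lemma rcan {a x y : Q} (h : x * a = y * a) : x = y := (QLoop.bij_right a).injective h

lemma Rt_apply (a u : Q) : Rt a u = u * a := rfl
lemma Lt_apply (a u : Q) : Lt a u = a * u := rfl

lemma ralt (hbol : IsRightBol Q) (x y : Q) : (x * y) * y = x * (y * y) := by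
  have h := hbol x y 1
  rwa [qmul_one, qmul_one] at h

/-- A right Bol loop of odd order has no nontrivial involutions. -/
lemma no_invol [Finite Q] (hbol : IsRightBol Q) (hodd : Odd (Nat.card Q))
    (w : Q) (hw : w * w = 1) : w = 1 := by
  classical
  letI : Fintype Q := Fintype.ofFinite Q
  haveI : Fact (Nat.Prime 2) := ⟨Nat.prime_two⟩
  have hσ : (Rt w) ^ (2 : ℕ) ^ (1 : ℕ) = 1 := by
    have h2 : ((2 : ℕ) ^ (1 : ℕ)) = 2 := by norm_num
    rw [h2]
    ext u
    have h1 : ((Rt w) ^ (2 : ℕ)) u = (u * w) * w := by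
      rw [pow_two, Equiv.Perm.mul_apply]; rfl
    rw [h1, ralt hbol, hw, qmul_one]
    rfl
  have hcard2 : ¬ (2 ∣ Fintype.card Q) := by
    intro hdvd
    have h1 : Odd (Fintype.card Q) := by rwa [Nat.card_eq_fintype_card] at hodd
    have h2 := Nat.odd_iff.mp h1
    omega
  obtain ⟨u, hu⟩ := Equiv.Perm.exists_fixed_point_of_prime hcard2 hσ
  have h3 : u * w = u * 1 := by
    rw [qmul_one]; exact hu
  exact lcan h3

lemma lpow_one' (y : Q) : lpow y 1 = y := by
  show lpow y 0 * y = y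
  show (1 : Q) * y = y
  exact qone_mul y

lemma lpow_add (hbol : IsRightBol Q) (y : Q) :
    ∀ n m : ℕ, lpow y m * lpow y n = lpow y (m + n) := by
  intro n
  induction n using Nat.strong_induction_on with
  | _ n IH =>
    match n with
    | 0 =>
      intro m
      rw [Nat.add_zero]
      show lpow y m * 1 = lpow y m
      exact qmul_one _
    | 1 =>
      intro m
      rw [lpow_one']
      rfl
    | (n + 2) =>
      have Pn : ∀ m, lpow y m * lpow y n = lpow y (m + n) := IH n (by omega)
      have hy : y * lpow y n = lpow y (n + 1) := by
        have h2 := Pn 1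
        rw [lpow_one'] at h2
        rw [h2]
        congr 1
        omega
      intro m
      have e1 : lpow y (n + 2) = (y * lpow y n) * y := by rw [hy]; rfl
      rw [e1, ← hbol (lpow y m) y (lpow y n)]
      have e2 : lpow y m * y = lpow y (m + 1) := rfl
      rw [e2, Pn (m + 1)]
      have e3 : lpow y (m + 1 + n) * y = lpow y (m + 1 + n + 1) := rfl
      rw [e3]
      congr 1
      omega

lemma exists_lpow_eq_one [Finite Q] (hbol : IsRightBol Q) (y : Q) :
    ∃ k, 0 < k ∧ lpow y k = 1 := by
  have key : ∀ i j : ℕ, i < j → lpow y i = lpow y j → ∃ k, 0 < k ∧ lpow y k = 1 := by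
    intro i j hij heq
    refine ⟨j - i, by omega, ?_⟩
    have h1 := lpow_add hbol y (j - i) i
    have e : i + (j - i) = j := by omega
    rw [e, ← heq] at h1
    have h2 : lpow y i * lpow y (j - i) = lpow y i * 1 := by rw [qmul_one]; exact h1
    exact lcan h2
  obtain ⟨i, j, hne, heq⟩ := Finite.exists_ne_map_eq_of_infinite (lpow y)
  rcases lt_or_gt_of_ne hne with h | h
  · exact key i j h heq
  · exact key j i h heq.symm

lemma exists_odd_lpow [Finite Q] (hbol : IsRightBol Q) (hodd : Odd (Nat.card Q)) (y : Q) :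
    ∃ k, Odd k ∧ lpow y k = 1 := by
  obtain ⟨k, hk0, hk1⟩ := exists_lpow_eq_one hbol y
  induction k using Nat.strong_induction_on with
  | _ k IH =>
    rcases Nat.even_or_odd k with he | ho
    · obtain ⟨m, rfl⟩ := he
      have hm : lpow y m * lpow y m = 1 := by
        rw [lpow_add hbol]; exact hk1
      have hm1 := no_invol hbol hodd _ hm
      exact IH m (by omega) (by omega) hm1
    · exact ⟨k, ho, hk1⟩

lemma exists_sq [Finite Q] (hbol : IsRightBol Q) (hodd : Odd (Nat.card Q)) (u : Q) :
    ∃ s : Q, s * s = u := by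
  obtain ⟨k, hko, hk1⟩ := exists_odd_lpow hbol hodd u
  obtain ⟨m, rfl⟩ := hko
  refine ⟨lpow u (m + 1), ?_⟩
  have h1 := lpow_add hbol u (m + 1) (m + 1)
  rw [h1]
  have e : (m + 1) + (m + 1) = (2 * m + 1) + 1 := by omega
  rw [e]
  show lpow u (2 * m + 1) * u = u
  rw [hk1]
  exact qone_mul u

/-- The powers 1, a, a² indexed by ZMod 3. -/
def hpow (a : Q) : ZMod 3 → Q := fun i => if i = 0 then 1 else if i = 1 then a else a * a

lemma hpow_zero (a : Q) : hpow a 0 = 1 := by simp [hpow]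
lemma hpow_one (a : Q) : hpow a 1 = a := by
  simp [hpow, show (1 : ZMod 3) ≠ 0 from by decide]
lemma hpow_two (a : Q) : hpow a 2 = a * a := by
  simp [hpow, show (2 : ZMod 3) ≠ 0 from by decide, show (2 : ZMod 3) ≠ 1 from by decide]

end Stmt10Aux
open Stmt10Aux in
/-- In a finite right Bol loop of odd order, every normal subloop of
order 3 is contained in the center. -/
theorem stmt10 (Q : Type*) [QLoop Q] [Finite Q] (hbol : IsRightBol Q)
    (hodd : Odd (Nat.card Q)) (H : Set Q) (hH : IsNormalSubloop H)
    (hcard : H.ncard = 3) :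
    H ⊆ loopCenter Q := by
  classical
  have hsub := hH.1
  have hfin : H.Finite := Set.toFinite H
  have h1H : (1 : Q) ∈ H := hsub.one_mem
  -- find a nontrivial element a of H
  have hex : ∃ x ∈ H, x ≠ 1 := by
    by_contra hcon
    push_neg at hcon
    have hs : H ⊆ ({1} : Set Q) := fun x hx => hcon x hx
    have hle := Set.ncard_le_ncard hs (Set.finite_singleton 1)
    rw [hcard, Set.ncard_singleton] at hle
    omega
  obtain ⟨a, haH, ha1⟩ := hex
  have hbH : a * a ∈ H := hsub.mul_mem haH haH
  have hba' : a * a ≠ a := by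
    intro h
    have h2 : a * a = 1 * a := by rw [qone_mul]; exact h
    exact ha1 (rcan h2)
  -- a * a ≠ 1 via the third element of H
  have hb1' : a * a ≠ 1 := by
    intro haa
    have hex2 : ∃ x ∈ H, x ≠ 1 ∧ x ≠ a := by
      by_contra hcon
      have hs : H ⊆ ({1, a} : Set Q) := by
        intro x hx
        rcases eq_or_ne x 1 with rfl | h1
        · exact Set.mem_insert _ _
        rcases eq_or_ne x a with rfl | h2
        · exact Set.mem_insert_of_mem _ rfl
        · exact absurd ⟨x, hx, h1, h2⟩ hcon
      have hle := Set.ncard_le_ncard hs (Set.toFinite _)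
      have h2 : ({1, a} : Set Q).ncard ≤ 2 := by
        have := Set.ncard_insert_le (1 : Q) ({a} : Set Q)
        rw [Set.ncard_singleton] at this
        exact this
      rw [hcard] at hle
      omega
    obtain ⟨x, hxH, hx1, hxa⟩ := hex2
    have hsub3 : ({1, a, x} : Set Q) ⊆ H := by
      intro z hz
      rcases hz with rfl | hz
      · exact h1H
      rcases hz with rfl | hz
      · exact haH
      · rw [Set.mem_singleton_iff] at hz; subst hz; exact hxH
    have hc3 : ({1, a, x} : Set Q).ncard = 3 := by
      rw [Set.ncard_insert_of_notMem (by
        simp only [Set.mem_insert_iff, Set.mem_singleton_iff]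
        push_neg
        exact ⟨fun h => ha1 h.symm, fun h => hx1 h.symm⟩) (Set.toFinite _),
        Set.ncard_insert_of_notMem (by
          simp only [Set.mem_singleton_iff]
          exact fun h => hxa h.symm) (Set.toFinite _),
        Set.ncard_singleton]
    have hHset : ({1, a, x} : Set Q) = H :=
      Set.eq_of_subset_of_ncard_le hsub3 (by rw [hcard, hc3]) hfin
    have hxaH : x * a ∈ H := hsub.mul_mem hxH haH
    rw [← hHset] at hxaH
    rcases hxaH with h | h
    · exact hxa (rcan (h.trans haa.symm))
    rcases h with h | h
    · have h2 : x * a = 1 * a := by rw [qone_mul]; exact h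
      exact hx1 (rcan h2)
    · rw [Set.mem_singleton_iff] at h
      have h2 : x * a = x * 1 := by rw [qmul_one]; exact h
      exact ha1 (lcan h2)
  -- H = {1, a, a*a}
  have hHset : H = ({1, a, a * a} : Set Q) := by
    have hsub3 : ({1, a, a * a} : Set Q) ⊆ H := by
      intro z hz
      rcases hz with rfl | hz
      · exact h1H
      rcases hz with rfl | hz
      · exact haH
      · rw [Set.mem_singleton_iff] at hz; subst hz; exact hbH
    have hc3 : ({1, a, a * a} : Set Q).ncard = 3 := by
      rw [Set.ncard_insert_of_notMem (by
        simp only [Set.mem_insert_iff, Set.mem_singleton_iff]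
        push_neg
        exact ⟨fun h => ha1 h.symm, fun h => hb1' h.symm⟩) (Set.toFinite _),
        Set.ncard_insert_of_notMem (by
          simp only [Set.mem_singleton_iff]
          exact fun h => hba' h.symm) (Set.toFinite _),
        Set.ncard_singleton]
    exact (Set.eq_of_subset_of_ncard_le hsub3 (by rw [hcard, hc3]) hfin).symm
  have hab1 : a * (a * a) = 1 := by
    have h : a * (a * a) ∈ H := hsub.mul_mem haH hbH
    rw [hHset] at h
    rcases h with h | h
    · exact h
    rcases h with h | h
    · exfalso
      have h2 : a * (a * a) = a * 1 := by rw [qmul_one]; exact h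
      exact hb1' (lcan h2)
    · exfalso
      rw [Set.mem_singleton_iff] at h
      have h2 : a * (a * a) = 1 * (a * a) := by rw [qone_mul]; exact h
      exact ha1 (rcan h2)
  have hba1 : (a * a) * a = 1 := by
    have h : (a * a) * a ∈ H := hsub.mul_mem hbH haH
    rw [hHset] at h
    rcases h with h | h
    · exact h
    rcases h with h | h
    · exfalso
      have h2 : (a * a) * a = 1 * a := by rw [qone_mul]; exact h
      exact hb1' (rcan h2)
    · exfalso
      rw [Set.mem_singleton_iff] at h
      have h2 : (a * a) * a = (a * a) * 1 := by rw [qmul_one]; exact h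
      exact ha1 (lcan h2)
  -- ZMod 3 bookkeeping
  have hcase : ∀ i : ZMod 3, i = 0 ∨ i = 1 ∨ i = 2 := by decide
  have hpinj : ∀ i j : ZMod 3, hpow a i = hpow a j → i = j := by
    intro i j hij
    rcases hcase i with rfl | rfl | rfl <;> rcases hcase j with rfl | rfl | rfl <;>
      simp only [hpow_zero, hpow_one, hpow_two] at hij <;>
      first
        | rfl
        | (exact absurd hij.symm ha1)
        | (exact absurd hij ha1)
        | (exact absurd hij.symm hb1')
        | (exact absurd hij hb1')
        | (exact absurd hij.symm hba')
        | (exact absurd hij hba')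
  have cancL : ∀ (i j : ZMod 3) (z : Q), hpow a i * z = hpow a j * z → i = j :=
    fun i j z h => hpinj _ _ (rcan h)
  have cancR : ∀ (i j : ZMod 3) (z : Q), z * hpow a i = z * hpow a j → i = j :=
    fun i j z h => hpinj _ _ (lcan h)
  -- right multiplication by powers of a composes
  have hstep : ∀ (z : Q) (j : ZMod 3), (z * hpow a j) * a = z * hpow a (j + 1) := by
    intro z j
    rcases hcase j with rfl | rfl | rfl
    · rw [hpow_zero, qmul_one, show (0 + 1 : ZMod 3) = 1 from by decide, hpow_one]
    · rw [hpow_one, show (1 + 1 : ZMod 3) = 2 from by decide, hpow_two]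
      exact ralt hbol z a
    · rw [hpow_two, show (2 + 1 : ZMod 3) = 0 from by decide, hpow_zero, qmul_one,
        ← ralt hbol z a]
      have h3 := hbol z a a
      rw [h3, hba1, qmul_one]
  -- normality: action of inner mappings on H
  have hNORM : ∀ φ : Equiv.Perm Q, φ ∈ innGroup Q → φ 1 = 1 →
      ∃ ε : ZMod 3, (ε = 1 ∨ ε = 2) ∧ ∀ i, φ (hpow a i) = hpow a (ε * i) := by
    intro φ hφ hφ1
    have himg := hH.2 φ hφ
    have hmem : ∀ x ∈ H, φ x ∈ H := fun x hx => himg ▸ Set.mem_image_of_mem φ hx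
    have hfa : φ a ∈ H := hmem a haH
    have hfb : φ (a * a) ∈ H := hmem _ hbH
    have hfa1 : φ a ≠ 1 := fun h => ha1 (φ.injective (h.trans hφ1.symm))
    have hfb1 : φ (a * a) ≠ 1 := fun h => hb1' (φ.injective (h.trans hφ1.symm))
    have hfab : φ a ≠ φ (a * a) := fun h => hba' (φ.injective h).symm
    rw [hHset] at hfa hfb
    have hfa' : φ a = a ∨ φ a = a * a := by
      rcases hfa with h | h
      · exact absurd h hfa1
      rcases h with h | h
      · exact Or.inl h
      · exact Or.inr h
    have hfb' : φ (a * a) = a ∨ φ (a * a) = a * a := by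
      rcases hfb with h | h
      · exact absurd h hfb1
      rcases h with h | h
      · exact Or.inl h
      · exact Or.inr h
    rcases hfa' with hA | hA
    · have hB : φ (a * a) = a * a := by
        rcases hfb' with h | h
        · exact absurd (hA.trans h.symm) hfab
        · exact h
      refine ⟨1, Or.inl rfl, fun i => ?_⟩
      rcases hcase i with rfl | rfl | rfl
      · rw [show (1 * 0 : ZMod 3) = 0 from by decide, hpow_zero]; exact hφ1
      · rw [show (1 * 1 : ZMod 3) = 1 from by decide, hpow_one]; exact hA
      · rw [show (1 * 2 : ZMod 3) = 2 from by decide, hpow_two]; exact hB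
    · have hB : φ (a * a) = a := by
        rcases hfb' with h | h
        · exact h
        · exact absurd (hA.trans h.symm) hfab
      refine ⟨2, Or.inr rfl, fun i => ?_⟩
      rcases hcase i with rfl | rfl | rfl
      · rw [show (2 * 0 : ZMod 3) = 0 from by decide, hpow_zero]; exact hφ1
      · rw [show (2 * 1 : ZMod 3) = 2 from by decide, hpow_two, hpow_one]; exact hA
      · rw [show (2 * 2 : ZMod 3) = 1 from by decide, hpow_one, hpow_two]; exact hB
  -- the three families of twist functions
  have Rgen : ∀ A B : Q, ∃ ε : ZMod 3, (ε = 1 ∨ ε = 2) ∧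
      ∀ i, (hpow a i * A) * B = hpow a (ε * i) * (A * B) := by
    intro A B
    set φ : Equiv.Perm Q := (Rt (A * B))⁻¹ * Rt B * Rt A with hφdef
    have hmemφ : φ ∈ innGroup Q :=
      Subgroup.subset_closure (Set.mem_union_left _ (Set.mem_union_left _ ⟨B, A, rfl⟩))
    have hφ1 : φ 1 = 1 := by
      show ((Rt (A * B))⁻¹ * Rt B * Rt A) 1 = 1
      rw [Equiv.Perm.mul_apply, Equiv.Perm.mul_apply]
      have e : Rt B (Rt A 1) = Rt (A * B) 1 := by
        rw [Rt_apply, Rt_apply, Rt_apply, qone_mul, qone_mul]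
      rw [e, Equiv.Perm.inv_def, Equiv.symm_apply_apply]
    obtain ⟨ε, hε, hspec⟩ := hNORM φ hmemφ hφ1
    refine ⟨ε, hε, fun i => ?_⟩
    have h2 := hspec i
    have h3 : Rt (A * B) (φ (hpow a i)) = (hpow a i * A) * B := by
      show Rt (A * B) (((Rt (A * B))⁻¹ * Rt B * Rt A) (hpow a i)) = _
      rw [Equiv.Perm.mul_apply, Equiv.Perm.mul_apply, Equiv.Perm.inv_def, Equiv.apply_symm_apply,
        Rt_apply, Rt_apply]
    rw [h2, Rt_apply] at h3
    exact h3.symm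
  have Lgen : ∀ v u : Q, ∃ ε : ZMod 3, (ε = 1 ∨ ε = 2) ∧
      ∀ i, v * (u * hpow a i) = (v * u) * hpow a (ε * i) := by
    intro v u
    set φ : Equiv.Perm Q := (Lt (v * u))⁻¹ * Lt v * Lt u with hφdef
    have hmemφ : φ ∈ innGroup Q :=
      Subgroup.subset_closure (Set.mem_union_left _ (Set.mem_union_right _ ⟨v, u, rfl⟩))
    have hφ1 : φ 1 = 1 := by
      show ((Lt (v * u))⁻¹ * Lt v * Lt u) 1 = 1
      rw [Equiv.Perm.mul_apply, Equiv.Perm.mul_apply]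
      have e : Lt v (Lt u 1) = Lt (v * u) 1 := by
        rw [Lt_apply, Lt_apply, Lt_apply, qmul_one, qmul_one]
      rw [e, Equiv.Perm.inv_def, Equiv.symm_apply_apply]
    obtain ⟨ε, hε, hspec⟩ := hNORM φ hmemφ hφ1
    refine ⟨ε, hε, fun i => ?_⟩
    have h2 := hspec i
    have h3 : Lt (v * u) (φ (hpow a i)) = v * (u * hpow a i) := by
      show Lt (v * u) (((Lt (v * u))⁻¹ * Lt v * Lt u) (hpow a i)) = _
      rw [Equiv.Perm.mul_apply, Equiv.Perm.mul_apply, Equiv.Perm.inv_def, Equiv.apply_symm_apply,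
        Lt_apply, Lt_apply]
    rw [h2, Lt_apply] at h3
    exact h3.symm
  have Tgen : ∀ u : Q, ∃ ε : ZMod 3, (ε = 1 ∨ ε = 2) ∧
      ∀ i, u * hpow a (ε * i) = hpow a i * u := by
    intro u
    set φ : Equiv.Perm Q := (Lt u)⁻¹ * Rt u with hφdef
    have hmemφ : φ ∈ innGroup Q :=
      Subgroup.subset_closure (Set.mem_union_right _ ⟨u, rfl⟩)
    have hφ1 : φ 1 = 1 := by
      show ((Lt u)⁻¹ * Rt u) 1 = 1
      rw [Equiv.Perm.mul_apply]
      have e : Rt u 1 = Lt u 1 := by rw [Rt_apply, Lt_apply, qone_mul, qmul_one]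
      rw [e, Equiv.Perm.inv_def, Equiv.symm_apply_apply]
    obtain ⟨ε, hε, hspec⟩ := hNORM φ hmemφ hφ1
    refine ⟨ε, hε, fun i => ?_⟩
    have h2 := hspec i
    have h3 : Lt u (φ (hpow a i)) = hpow a i * u := by
      show Lt u (((Lt u)⁻¹ * Rt u) (hpow a i)) = _
      rw [Equiv.Perm.mul_apply, Equiv.Perm.inv_def, Equiv.apply_symm_apply, Rt_apply]
    rw [h2, Lt_apply] at h3
    exact h3
  choose nf hnf1 hnf2 using Rgen
  choose mf hmf1 hmf2 using Lgen
  choose tf htf1 htf2 using Tgen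
  have unitsq : ∀ {ε : ZMod 3}, (ε = 1 ∨ ε = 2) → ε * ε = 1 := by
    rintro ε (rfl | rfl) <;> decide
  have tt : ∀ u : Q, tf u * tf u = 1 := fun u => unitsq (htf1 u)
  have tspec : ∀ (z : Q) (k : ZMod 3), hpow a k * z = z * hpow a (tf z * k) :=
    fun z k => (htf2 z k).symm
  have tA : ∀ w : Q, w * a = hpow a (tf w) * w := by
    intro w
    have h := htf2 w (tf w)
    rwa [tt w, hpow_one] at h
  -- basic nf facts
  have nf_one : ∀ x : Q, nf x 1 = 1 := by
    intro x
    have h := hnf2 x 1 1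
    rw [qmul_one, qmul_one] at h
    have h2 := cancL _ _ _ h
    rw [mul_one] at h2
    exact h2.symm
  have E3 : ∀ x y : Q, nf (x * y) x * nf x y = 1 := by
    intro x y
    have h1 := hnf2 x y 1
    have h2 := hnf2 (x * y) x (nf x y * 1)
    have hb := hbol (hpow a 1) x y
    rw [h1, h2] at hb
    have h3 := cancL _ _ _ hb
    rw [mul_one] at h3
    exact h3
  have nxx : ∀ x : Q, nf x x = 1 := by
    intro x
    have h := E3 x 1
    rw [qmul_one, nf_one, mul_one] at h
    exact h
  -- the key mixed identity
  have E2 : ∀ w y : Q,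
      tf (w * y) * (nf w y * tf w) + 1 = mf w y * (tf y + 1) := by
    intro w y
    have hb := hbol w a y
    have l2 := hnf2 w y (tf w)
    have l3 := tspec (w * y) (nf w y * tf w)
    have l4 := hstep (w * y) (tf (w * y) * (nf w y * tf w))
    have r1 : a * y = y * hpow a (tf y) := by
      have h := tspec y 1
      rwa [hpow_one, mul_one] at h
    have r2 := hstep y (tf y)
    have r3 := hmf2 w y (tf y + 1)
    rw [tA w, l2, l3, l4, r1, r2, r3] at hb
    exact cancR _ _ _ hb
  have E4 : ∀ w y : Q, tf (w * y) = tf w * tf y * nf w y := by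
    intro w y
    have h := E2 w y
    rcases htf1 (w * y) with h1 | h1 <;> rcases htf1 w with h2 | h2 <;>
      rcases htf1 y with h3 | h3 <;> rcases hnf1 w y with h4 | h4 <;>
      rcases hmf1 w y with h5 | h5 <;>
      rw [h1, h2, h3, h4, h5] at h <;> rw [h1, h2, h3, h4] <;>
      first
        | rfl
        | (exact absurd h (by decide))
  have tsq : ∀ x : Q, tf (x * x) = 1 := by
    intro x
    have h := E4 x x
    rw [nxx, mul_one, tt] at h
    exact h
  have tone : ∀ u : Q, tf u = 1 := by
    intro u
    obtain ⟨s, hs⟩ := exists_sq hbol hodd u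
    rw [← hs]
    exact tsq s
  have none : ∀ w y : Q, nf w y = 1 := by
    intro w y
    have h := E4 w y
    rw [tone, tone, tone, one_mul, one_mul] at h
    exact h.symm
  have mone : ∀ w y : Q, mf w y = 1 := by
    intro w y
    have h := E2 w y
    rw [tone, tone, tone, none] at h
    rcases hmf1 w y with h5 | h5
    · exact h5
    · rw [h5] at h
      exact absurd h (by decide)
  -- the three central properties of a
  have comm_a : ∀ y : Q, a * y = y * a := by
    intro y
    have h := tspec y 1
    rw [tone y, one_mul, hpow_one] at h
    exact h
  have nl_a : ∀ w x : Q, (a * w) * x = a * (w * x) := by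
    intro w x
    have h := hnf2 w x 1
    rw [none, one_mul, hpow_one] at h
    exact h
  have nr_a : ∀ v u : Q, v * (u * a) = (v * u) * a := by
    intro v u
    have h := hmf2 v u 1
    rw [mone, one_mul, hpow_one] at h
    exact h
  have nm_a : ∀ y z : Q, y * (a * z) = (y * a) * z := by
    intro y z
    calc y * (a * z) = y * (z * a) := by rw [comm_a]
      _ = (y * z) * a := nr_a y z
      _ = a * (y * z) := (comm_a _).symm
      _ = (a * y) * z := (nl_a y z).symm
      _ = (y * a) * z := by rw [comm_a]
  -- properties of b = a * a
  have comm_b : ∀ y : Q, (a * a) * y = y * (a * a) := by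
    intro y
    calc (a * a) * y = a * (a * y) := nl_a a y
      _ = a * (y * a) := by rw [comm_a y]
      _ = (a * y) * a := (nl_a y a).symm
      _ = (y * a) * a := by rw [comm_a y]
      _ = y * (a * a) := ralt hbol y a
  have nl_b : ∀ y z : Q, (a * a) * (y * z) = ((a * a) * y) * z := by
    intro y z
    calc (a * a) * (y * z) = a * (a * (y * z)) := nl_a a (y * z)
      _ = a * ((a * y) * z) := by rw [← nl_a y z]
      _ = (a * (a * y)) * z := (nl_a (a * y) z).symm
      _ = ((a * a) * y) * z := by rw [nl_a a y]
  have nm_b : ∀ y z : Q, y * ((a * a) * z) = (y * (a * a)) * z := by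
    intro y z
    calc y * ((a * a) * z) = y * (a * (a * z)) := by rw [nl_a a z]
      _ = (y * a) * (a * z) := nm_a y (a * z)
      _ = ((y * a) * a) * z := nm_a (y * a) z
      _ = (y * (a * a)) * z := by rw [ralt hbol y a]
  have nr_b : ∀ y z : Q, y * (z * (a * a)) = (y * z) * (a * a) := by
    intro y z
    calc y * (z * (a * a)) = y * ((z * a) * a) := by rw [← ralt hbol z a]
      _ = (y * (z * a)) * a := nr_a y (z * a)
      _ = ((y * z) * a) * a := by rw [nr_a y z]
      _ = (y * z) * (a * a) := ralt hbol (y * z) a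
  -- conclude
  intro c hc
  rw [hHset] at hc
  simp only [Set.mem_insert_iff, Set.mem_singleton_iff] at hc
  show ∀ y z : Q, c * y = y * c ∧ c * (y * z) = (c * y) * z ∧
      y * (c * z) = (y * c) * z ∧ y * (z * c) = (y * z) * c
  rcases hc with rfl | rfl | rfl
  · intro y z
    refine ⟨by rw [qone_mul, qmul_one], ?_, ?_, ?_⟩
    · rw [qone_mul, qone_mul]
    · rw [qone_mul, qmul_one]
    · rw [qmul_one, qmul_one]
  · intro y z
    exact ⟨comm_a y, (nl_a y z).symm, nm_a y z, nr_a y z⟩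
  · intro y z
    exact ⟨comm_b y, nl_b y z, nm_b y z, nr_b y z⟩
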